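/- Explicit formula for higher derivatives of the logarithmic derivative (Lemma 2.3): for every n ≥ 0 and every x ∈ U, d^n/dx^n ( y′(x)/y(x) ) = ∑_{m=1}^{n+1} (−1)^{m+1} (1/m) ∑ ( (n+1)!/(a_1!⋯a_m!) ) · y^{(a_1)}(x) y^{(a_2)}(x) ⋯ y^{(a_m)}(x) / y(x)^m, where the inner sum runs over all ordered m-tuples (a_1,…,a_m) of positive integers with a_1+⋯+a_m = n+1. Equivalently, grouping ordered tuples into nonincreasing partitions a_1 ≥ a_2 ≥ ⋯ ≥ a_m ≥ 1 of n+1, the coefficient of y^{(a_1)}⋯y^{(a_m)}/y^m is C_{[a_1,…,a_m]} = (−1)^{m+1}(1/m) P(a_1,…,a_m) (a_1+⋯+a_m)!/(a_1!⋯a_m!), with P(a_1,…,a_m) the number of distinct sequences obtained by permuting the coordinates. -/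

import Mathlib

open Finset

private def Sfin (N m : ℕ) : Finset (Fin m → ℕ) :=
  (Fintype.piFinset fun _ : Fin m => Finset.range (N + 1)).filter
    (fun a => (∀ i, 1 ≤ a i) ∧ ∑ i, a i = N)

private lemma mem_Sfin {N m : ℕ} {a : Fin m → ℕ} :
    a ∈ Sfin N m ↔ (∀ i, 1 ≤ a i) ∧ ∑ i, a i = N := by
  constructor
  · exact fun h => (Finset.mem_filter.mp h).2
  · intro h
    refine Finset.mem_filter.mpr ⟨Fintype.mem_piFinset.mpr fun i => ?_, h⟩
    rw [Finset.mem_range]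
    have h1 : a i ≤ ∑ j, a j :=
      Finset.single_le_sum (fun j _ => Nat.zero_le _) (Finset.mem_univ i)
    omega

private lemma prod_update_eq {β : Type*} [CommMonoid β] {m : ℕ} (f : ℕ → β) (a : Fin m → ℕ)
    (i : Fin m) (w : ℕ) :
    ∏ j, f (Function.update a i w j) = f w * ∏ j ∈ univ.erase i, f (a j) := by
  rw [← Finset.mul_prod_erase univ _ (mem_univ i), Function.update_self]
  exact congrArg _ (Finset.prod_congr rfl fun j hj => by
    rw [Function.update_of_ne (mem_erase.mp hj).1])

private lemma sum_update_eq {m : ℕ} (a : Fin m → ℕ) (i : Fin m) (w : ℕ) :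
    ∑ j, Function.update a i w j = w + ∑ j ∈ univ.erase i, a j := by
  rw [← Finset.add_sum_erase univ _ (mem_univ i), Function.update_self]
  exact congrArg _ (Finset.sum_congr rfl fun j hj => by
    rw [Function.update_of_ne (mem_erase.mp hj).1])

private lemma part1 (v : ℕ → ℝ) (N m : ℕ) :
    ∑ a ∈ Sfin N m, ((N.factorial : ℝ)/∏ i, ((a i).factorial : ℝ)) *
        (∑ i, (∏ j ∈ univ.erase i, v (a j)) * v (a i + 1))
    = ∑ b ∈ Sfin (N+1) m,
        (((N:ℝ) + 1) - ∑ i, (if b i = 1 then (1:ℝ) else 0)) *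
          ((N.factorial : ℝ)/∏ i, ((b i).factorial : ℝ)) * ∏ i, v (b i) := by
  have step1 : ∀ i : Fin m,
      ∑ a ∈ Sfin N m, ((N.factorial : ℝ)/∏ j, ((a j).factorial : ℝ)) *
          ((∏ j ∈ univ.erase i, v (a j)) * v (a i + 1))
      = ∑ b ∈ (Sfin (N+1) m).filter (fun b => 2 ≤ b i),
          ((b i : ℝ)) * ((N.factorial : ℝ)/∏ j, ((b j).factorial : ℝ)) * ∏ j, v (b j) := by
    intro i
    refine Finset.sum_nbij' (fun a => Function.update a i (a i + 1))
      (fun b => Function.update b i (b i - 1)) ?_ ?_ ?_ ?_ ?_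
    · intro a ha
      obtain ⟨hpos, hsum⟩ := mem_Sfin.mp ha
      have hesum : a i + ∑ j ∈ univ.erase i, a j = N := by
        rw [Finset.add_sum_erase univ a (mem_univ i)]; exact hsum
      refine Finset.mem_filter.mpr ⟨mem_Sfin.mpr ⟨?_, ?_⟩, ?_⟩
      · intro j
        beta_reduce
        rcases eq_or_ne j i with rfl | hne
        · simp [Function.update_self]
        · rw [Function.update_of_ne hne]; exact hpos j
      · beta_reduce; rw [sum_update_eq]; omega
      · beta_reduce; rw [Function.update_self]; have := hpos i; omega
    · intro b hb
      obtain ⟨hb1, hbi⟩ := Finset.mem_filter.mp hb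
      obtain ⟨hpos, hsum⟩ := mem_Sfin.mp hb1
      have hesum : b i + ∑ j ∈ univ.erase i, b j = N + 1 := by
        rw [Finset.add_sum_erase univ b (mem_univ i)]; exact hsum
      refine mem_Sfin.mpr ⟨?_, ?_⟩
      · intro j
        beta_reduce
        rcases eq_or_ne j i with rfl | hne
        · rw [Function.update_self]; omega
        · rw [Function.update_of_ne hne]; exact hpos j
      · beta_reduce
        rw [sum_update_eq]
        have h2 : ∑ j ∈ univ.erase i, Function.update b i (b i - 1) j
            = ∑ j ∈ univ.erase i, b j :=
          Finset.sum_congr rfl fun j hj => by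
            rw [Function.update_of_ne (mem_erase.mp hj).1]
        omega
    · intro a _
      beta_reduce
      funext j
      rcases eq_or_ne j i with rfl | hne
      · simp [Function.update_self]
      · simp [Function.update_of_ne hne]
    · intro b hb
      have hbi := (Finset.mem_filter.mp hb).2
      beta_reduce
      funext j
      rcases eq_or_ne j i with rfl | hne
      · simp only [Function.update_self]; omega
      · simp [Function.update_of_ne hne]
    · intro a ha
      obtain ⟨hpos, hsum⟩ := mem_Sfin.mp ha
      beta_reduce
      simp only [Function.update_self]
      rw [prod_update_eq (fun k => ((Nat.factorial k : ℕ) : ℝ)) a i (a i + 1),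
        prod_update_eq v a i (a i + 1)]
      have hfac : ∏ j, ((a j).factorial : ℝ)
          = ((a i).factorial : ℝ) * ∏ j ∈ univ.erase i, ((a j).factorial : ℝ) := by
        exact (Finset.mul_prod_erase univ (fun j => ((a j).factorial : ℝ)) (mem_univ i)).symm
      have h1 : (((a i).factorial : ℝ)) ≠ 0 := Nat.cast_ne_zero.mpr (Nat.factorial_ne_zero _)
      have h2 : (∏ j ∈ univ.erase i, ((a j).factorial : ℝ)) ≠ 0 :=
        Finset.prod_ne_zero_iff.mpr fun j _ => Nat.cast_ne_zero.mpr (Nat.factorial_ne_zero _)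
      rw [hfac, Nat.factorial_succ]
      push_cast
      field_simp
  calc ∑ a ∈ Sfin N m, ((N.factorial : ℝ)/∏ i, ((a i).factorial : ℝ)) *
        (∑ i, (∏ j ∈ univ.erase i, v (a j)) * v (a i + 1))
      = ∑ i : Fin m, ∑ a ∈ Sfin N m, ((N.factorial : ℝ)/∏ j, ((a j).factorial : ℝ)) *
          ((∏ j ∈ univ.erase i, v (a j)) * v (a i + 1)) := by
        simp only [Finset.mul_sum]; rw [Finset.sum_comm]
    _ = ∑ i : Fin m, ∑ b ∈ Sfin (N+1) m, (if 2 ≤ b i then (b i : ℝ) else 0) *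
          ((N.factorial : ℝ)/∏ j, ((b j).factorial : ℝ)) * ∏ j, v (b j) := by
        refine Finset.sum_congr rfl fun i _ => ?_
        rw [step1 i, Finset.sum_filter]
        exact Finset.sum_congr rfl fun b _ => by
          split <;> simp
    _ = ∑ b ∈ Sfin (N+1) m, (∑ i, if 2 ≤ b i then (b i : ℝ) else 0) *
          ((N.factorial : ℝ)/∏ j, ((b j).factorial : ℝ)) * ∏ j, v (b j) := by
        rw [Finset.sum_comm]
        exact Finset.sum_congr rfl fun b _ => by rw [Finset.sum_mul, Finset.sum_mul]
    _ = ∑ b ∈ Sfin (N+1) m,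
        (((N:ℝ) + 1) - ∑ i, (if b i = 1 then (1:ℝ) else 0)) *
          ((N.factorial : ℝ)/∏ i, ((b i).factorial : ℝ)) * ∏ i, v (b i) := by
        refine Finset.sum_congr rfl fun b hb => ?_
        obtain ⟨hpos, hsum⟩ := mem_Sfin.mp hb
        congr 2
        have hpt : ∀ i : Fin m, (if 2 ≤ b i then (b i : ℝ) else 0)
            = (b i : ℝ) - (if b i = 1 then (1:ℝ) else 0) := by
          intro i
          have := hpos i
          rcases eq_or_ne (b i) 1 with h1 | h1
          · simp [h1]
          · have : 2 ≤ b i := by omega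
            simp [this, h1]
        rw [Finset.sum_congr rfl fun i _ => hpt i, Finset.sum_sub_distrib]
        have : ∑ i, ((b i : ℝ)) = ((N:ℝ) + 1) := by
          rw [← Nat.cast_sum]; rw [hsum]; push_cast; ring
        rw [this]

private lemma part2 (v : ℕ → ℝ) (N m : ℕ) :
    ∑ a ∈ Sfin N m, ((N.factorial : ℝ)/∏ i, ((a i).factorial : ℝ)) * (v 1 * ∏ i, v (a i))
    = ∑ c ∈ (Sfin (N+1) (m+1)).filter (fun c => c (Fin.last m) = 1),
        ((N.factorial : ℝ)/∏ i, ((c i).factorial : ℝ)) * ∏ i, v (c i) := by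
  refine Finset.sum_nbij' (fun a => (Fin.snoc a 1 : Fin (m+1) → ℕ))
    (fun c => Fin.init c) ?_ ?_ ?_ ?_ ?_
  · intro a ha
    obtain ⟨hpos, hsum⟩ := mem_Sfin.mp ha
    refine Finset.mem_filter.mpr ⟨mem_Sfin.mpr ⟨?_, ?_⟩, by simp⟩
    · intro i
      induction i using Fin.lastCases with
      | last => simp
      | cast i => simpa using hpos i
    · rw [Fin.sum_univ_castSucc]
      simp [hsum]
  · intro c hc
    obtain ⟨hc1, hlast⟩ := Finset.mem_filter.mp hc
    obtain ⟨hpos, hsum⟩ := mem_Sfin.mp hc1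
    refine mem_Sfin.mpr ⟨fun i => hpos i.castSucc, ?_⟩
    rw [Fin.sum_univ_castSucc, hlast] at hsum
    simpa [Fin.init] using Nat.succ_injective hsum
  · intro a _; simp
  · intro c hc
    have hlast := (Finset.mem_filter.mp hc).2
    conv_rhs => rw [← Fin.snoc_init_self c]
    simp [hlast]
  · intro a _
    rw [Fin.prod_univ_castSucc
        (f := fun i : Fin (m+1) => (((Fin.snoc a 1 : Fin (m+1) → ℕ) i).factorial : ℝ)),
      Fin.prod_univ_castSucc (f := fun i : Fin (m+1) => v ((Fin.snoc a 1 : Fin (m+1) → ℕ) i))]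
    simp only [Fin.snoc_castSucc, Fin.snoc_last, Nat.factorial_one, Nat.cast_one, mul_one]
    ring

private lemma part3 (v : ℕ → ℝ) (N m : ℕ) :
    ((m:ℝ)+1) * ∑ c ∈ (Sfin (N+1) (m+1)).filter (fun c => c (Fin.last m) = 1),
        ((N.factorial : ℝ)/∏ i, ((c i).factorial : ℝ)) * ∏ i, v (c i)
    = ∑ c ∈ Sfin (N+1) (m+1),
        (∑ j, (if c j = 1 then (1:ℝ) else 0)) *
          (((N.factorial : ℝ)/∏ i, ((c i).factorial : ℝ)) * ∏ i, v (c i)) := by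
  have hsym : ∀ j : Fin (m+1),
      ∑ c ∈ (Sfin (N+1) (m+1)).filter (fun c => c j = 1),
        ((N.factorial : ℝ)/∏ i, ((c i).factorial : ℝ)) * ∏ i, v (c i)
      = ∑ c ∈ (Sfin (N+1) (m+1)).filter (fun c => c (Fin.last m) = 1),
        ((N.factorial : ℝ)/∏ i, ((c i).factorial : ℝ)) * ∏ i, v (c i) := by
    intro j
    set σ := Equiv.swap j (Fin.last m) with hσ
    have hmem : ∀ c : Fin (m+1) → ℕ, c ∈ Sfin (N+1) (m+1) → (c ∘ σ) ∈ Sfin (N+1) (m+1) := by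
      intro c hc
      obtain ⟨hpos, hsum⟩ := mem_Sfin.mp hc
      exact mem_Sfin.mpr ⟨fun i => hpos (σ i), by rw [← hsum]; exact Equiv.sum_comp σ c⟩
    refine Finset.sum_nbij' (fun c => c ∘ σ) (fun c => c ∘ σ) ?_ ?_ ?_ ?_ ?_
    · intro c hc
      obtain ⟨hc1, hj⟩ := Finset.mem_filter.mp hc
      refine Finset.mem_filter.mpr ⟨hmem c hc1, ?_⟩
      simpa [σ, Equiv.swap_apply_right] using hj
    · intro c hc
      obtain ⟨hc1, hj⟩ := Finset.mem_filter.mp hc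
      refine Finset.mem_filter.mpr ⟨hmem c hc1, ?_⟩
      simpa [σ, Equiv.swap_apply_left] using hj
    · intro c _; funext i; simp [σ, Equiv.swap_apply_self]
    · intro c _; funext i; simp [σ, Equiv.swap_apply_self]
    · intro c _
      have h1 : ∏ i, ((((c ∘ σ) i) : ℕ).factorial : ℝ) = ∏ i, ((c i).factorial : ℝ) :=
        Equiv.prod_comp σ (fun k => ((c k).factorial : ℝ))
      have h2 : ∏ i, v ((c ∘ σ) i) = ∏ i, v (c i) := Equiv.prod_comp σ (fun k => v (c k))
      rw [h1, h2]
  calc ((m:ℝ)+1) * ∑ c ∈ (Sfin (N+1) (m+1)).filter (fun c => c (Fin.last m) = 1),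
        ((N.factorial : ℝ)/∏ i, ((c i).factorial : ℝ)) * ∏ i, v (c i)
      = ∑ j : Fin (m+1), ∑ c ∈ (Sfin (N+1) (m+1)).filter (fun c => c j = 1),
          ((N.factorial : ℝ)/∏ i, ((c i).factorial : ℝ)) * ∏ i, v (c i) := by
        rw [Finset.sum_congr rfl (fun j _ => hsym j), Finset.sum_const, card_univ,
          Fintype.card_fin, nsmul_eq_mul]
        push_cast; ring
    _ = ∑ c ∈ Sfin (N+1) (m+1),
          (∑ j, (if c j = 1 then (1:ℝ) else 0)) *
            (((N.factorial : ℝ)/∏ i, ((c i).factorial : ℝ)) * ∏ i, v (c i)) := by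
        simp only [Finset.sum_filter, Finset.sum_mul, ite_mul, one_mul, zero_mul]
        rw [Finset.sum_comm]

private lemma key (v : ℕ → ℝ) (u : ℝ) (hu : u ≠ 0) (N : ℕ) (hN : 1 ≤ N) :
    (∑ m ∈ Icc 1 N, (-1:ℝ)^(m+1) * (1/m) *
       ∑ a ∈ Sfin N m, ((N.factorial :ℝ)/∏ i, ((a i).factorial : ℝ)) *
         (∑ i, (∏ j ∈ univ.erase i, v (a j)) * v (a i + 1)) / u ^ m)
    - (∑ m ∈ Icc 1 N, (-1:ℝ)^(m+1) *
       ∑ a ∈ Sfin N m, ((N.factorial :ℝ)/∏ i, ((a i).factorial : ℝ)) *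
         (v 1 * ∏ i, v (a i)) / u ^ (m+1))
  = ∑ m ∈ Icc 1 (N+1), (-1:ℝ)^(m+1) * (1/m) *
       ∑ a ∈ Sfin (N+1) m, (((N+1).factorial :ℝ)/∏ i, ((a i).factorial : ℝ)) *
         (∏ i, v (a i)) / u ^ m := by
  set f : ℕ → ℝ := fun m => (-1:ℝ)^(m+1) * (1/m) *
    ((∑ b ∈ Sfin (N+1) m,
        (((N:ℝ) + 1) - ∑ i, (if b i = 1 then (1:ℝ) else 0)) *
          ((N.factorial : ℝ)/∏ i, ((b i).factorial : ℝ)) * ∏ i, v (b i)) / u ^ m) with hf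
  set g : ℕ → ℝ := fun m => (-1:ℝ)^(m+1) * (1/m) *
    ((∑ c ∈ Sfin (N+1) m,
        (∑ j, (if c j = 1 then (1:ℝ) else 0)) *
          (((N.factorial : ℝ)/∏ i, ((c i).factorial : ℝ)) * ∏ i, v (c i))) / u ^ m) with hg
  have hfirst : (∑ m ∈ Icc 1 N, (-1:ℝ)^(m+1) * (1/m) *
       ∑ a ∈ Sfin N m, ((N.factorial :ℝ)/∏ i, ((a i).factorial : ℝ)) *
         (∑ i, (∏ j ∈ univ.erase i, v (a j)) * v (a i + 1)) / u ^ m)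
      = ∑ m ∈ Icc 1 N, f m := by
    refine Finset.sum_congr rfl fun m _ => ?_
    rw [hf]
    beta_reduce
    rw [← part1 v N m, Finset.sum_div]
  have hsecond : (∑ m ∈ Icc 1 N, (-1:ℝ)^(m+1) *
       ∑ a ∈ Sfin N m, ((N.factorial :ℝ)/∏ i, ((a i).factorial : ℝ)) *
         (v 1 * ∏ i, v (a i)) / u ^ (m+1))
      = -∑ m ∈ Icc 1 N, g (m+1) := by
    rw [← Finset.sum_neg_distrib]
    refine Finset.sum_congr rfl fun m _ => ?_
    rw [hg]
    beta_reduce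
    rw [← Finset.sum_div, part2 v N m]
    set A := ∑ c ∈ (Sfin (N+1) (m+1)).filter (fun c => c (Fin.last m) = 1),
        ((N.factorial : ℝ)/∏ i, ((c i).factorial : ℝ)) * ∏ i, v (c i) with hA
    have e3 : (∑ c ∈ Sfin (N+1) (m+1),
        (∑ j, (if c j = 1 then (1:ℝ) else 0)) *
          (((N.factorial : ℝ)/∏ i, ((c i).factorial : ℝ)) * ∏ i, v (c i))) = ((m:ℝ)+1) * A := by
      rw [← part3 v N m]
    rw [e3]
    have hm1 : ((m:ℝ)+1) ≠ 0 := by positivity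
    have hup : u ^ (m+1) ≠ 0 := pow_ne_zero _ hu
    push_cast
    field_simp
    ring
  have hshift : ∑ m ∈ Icc 1 N, g (m+1) = ∑ m ∈ Icc 2 (N+1), g m := by
    rw [← Finset.map_add_right_Icc 1 N 1, Finset.sum_map]
    simp [addRightEmbedding]
  have hsplit1 : ∑ m ∈ Icc 1 (N+1), f m = (∑ m ∈ Icc 1 N, f m) + f (N+1) :=
    Finset.sum_Icc_succ_top (by omega) f
  have hicc : Icc 1 (N+1) = insert 1 (Icc 2 (N+1)) := by
    ext k; simp only [Finset.mem_Icc, Finset.mem_insert]; omega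
  have hsplit2 : ∑ m ∈ Icc 1 (N+1), g m = g 1 + ∑ m ∈ Icc 2 (N+1), g m := by
    rw [hicc, Finset.sum_insert (by simp)]
  have hf0 : f (N+1) = 0 := by
    rw [hf]
    beta_reduce
    have hz : ∀ b ∈ Sfin (N+1) (N+1),
        (((N:ℝ) + 1) - ∑ i, (if b i = 1 then (1:ℝ) else 0)) *
          ((N.factorial : ℝ)/∏ i, ((b i).factorial : ℝ)) * ∏ i, v (b i) = 0 := by
      intro b hb
      obtain ⟨hpos, hsum⟩ := mem_Sfin.mp hb
      have hone : ∀ i, b i = 1 := by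
        intro i
        by_contra hne
        have h2 : 2 ≤ b i := by have := hpos i; omega
        have hcard : (univ.erase i).card • 1 ≤ ∑ j ∈ univ.erase i, b j :=
          Finset.card_nsmul_le_sum _ _ _ (fun j _ => hpos j)
        have hcard2 : (univ.erase i).card = N := by
          rw [Finset.card_erase_of_mem (mem_univ i), card_univ, Fintype.card_fin]
          omega
        simp only [smul_eq_mul, mul_one, hcard2] at hcard
        have hesum : b i + ∑ j ∈ univ.erase i, b j = N + 1 := by
          rw [Finset.add_sum_erase univ b (mem_univ i)]; exact hsum
        omega
      have : ∑ i : Fin (N+1), (if b i = 1 then (1:ℝ) else 0) = (N:ℝ)+1 := by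
        simp [hone]
      rw [this]
      simp
    rw [Finset.sum_eq_zero hz]
    simp
  have hg1 : g 1 = 0 := by
    rw [hg]
    beta_reduce
    have hz : ∀ c ∈ Sfin (N+1) 1,
        (∑ j, (if c j = 1 then (1:ℝ) else 0)) *
          (((N.factorial : ℝ)/∏ i, ((c i).factorial : ℝ)) * ∏ i, v (c i)) = 0 := by
      intro c hc
      obtain ⟨hpos, hsum⟩ := mem_Sfin.mp hc
      have hc0 : c 0 = N + 1 := by simpa [Fin.sum_univ_one] using hsum
      have : ∑ j : Fin 1, (if c j = 1 then (1:ℝ) else 0) = 0 := by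
        rw [Fin.sum_univ_one]
        have : c 0 ≠ 1 := by omega
        simp [this]
      rw [this, zero_mul]
    rw [Finset.sum_eq_zero hz]
    simp
  rw [hfirst, hsecond, hshift, sub_neg_eq_add]
  have : ∑ m ∈ Icc 1 N, f m = ∑ m ∈ Icc 1 (N+1), f m - f (N+1) := by rw [hsplit1]; ring
  rw [this, hf0, sub_zero]
  have : ∑ m ∈ Icc 2 (N+1), g m = ∑ m ∈ Icc 1 (N+1), g m - g 1 := by rw [hsplit2]; ring
  rw [this, hg1, sub_zero, ← Finset.sum_add_distrib]
  refine Finset.sum_congr rfl fun m hm => ?_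
  rw [hf, hg]
  beta_reduce
  rw [← Finset.sum_div (Sfin (N+1) m)
    (fun a => (((N+1).factorial :ℝ)/∏ i, ((a i).factorial : ℝ)) * (∏ i, v (a i))) (u ^ m)]
  rw [← mul_add]
  congr 1
  rw [← add_div]
  congr 1
  rw [← Finset.sum_add_distrib]
  refine Finset.sum_congr rfl fun b _ => ?_
  push_cast [Nat.factorial_succ]
  ring

private lemma diffAt_iteratedDeriv {U : Set ℝ} (hU : IsOpen U) {y : ℝ → ℝ} {N k : ℕ}
    (hy : ContDiffOn ℝ (N + 1) y U) (hk : k ≤ N) {x : ℝ} (hx : x ∈ U) :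
    DifferentiableAt ℝ (iteratedDeriv k y) x := by
  have hEq : Set.EqOn (iteratedDerivWithin k y U) (iteratedDeriv k y) U := by
    intro z hz
    rw [iteratedDerivWithin_eq_iteratedFDerivWithin, iteratedDeriv_eq_iteratedFDeriv,
      iteratedFDerivWithin_of_isOpen k hU hz]
  have h1 : DifferentiableOn ℝ (iteratedDerivWithin k y U) U := by
    refine hy.differentiableOn_iteratedDerivWithin ?_ hU.uniqueDiffOn
    exact_mod_cast Nat.lt_succ_of_le hk
  exact (((h1 x hx).congr (fun z hz => (hEq hz).symm) (hEq hx).symm).differentiableAt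
    (hU.mem_nhds hx))

private lemma hasDerivAt_rhs {U : Set ℝ} (hU : IsOpen U) {y : ℝ → ℝ} {N : ℕ} (hN : 1 ≤ N)
    (hy : ContDiffOn ℝ (N + 1) y U) (hy0 : ∀ x ∈ U, y x ≠ 0) {x : ℝ} (hx : x ∈ U) :
    HasDerivAt (fun t => ∑ m ∈ Icc 1 N, (-1:ℝ)^(m+1) * (1/m) *
        ∑ a ∈ Sfin N m, ((N.factorial : ℝ) / ∏ i, ((a i).factorial : ℝ)) *
          (∏ i, iteratedDeriv (a i) y t) / (y t) ^ m)
      (∑ m ∈ Icc 1 (N+1), (-1:ℝ)^(m+1) * (1/m) *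
        ∑ a ∈ Sfin (N+1) m, (((N+1).factorial : ℝ) / ∏ i, ((a i).factorial : ℝ)) *
          (∏ i, iteratedDeriv (a i) y x) / (y x) ^ m) x := by
  set v : ℕ → ℝ := fun k => iteratedDeriv k y x with hv
  set u : ℝ := y x with hud
  have hu : u ≠ 0 := hy0 x hx
  have hderivs : ∀ k ≤ N, HasDerivAt (iteratedDeriv k y) (v (k+1)) x := by
    intro k hk
    have hd := diffAt_iteratedDeriv hU hy hk hx
    have := hd.hasDerivAt
    rw [hv]
    beta_reduce
    rw [iteratedDeriv_succ]
    exact this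
  have hy' : HasDerivAt y (v 1) x := by
    have h0 := hderivs 0 (Nat.zero_le N)
    rwa [iteratedDeriv_zero] at h0
  -- derivative of each inner term
  have hterm : ∀ m ∈ Icc 1 N, ∀ a ∈ Sfin N m,
      HasDerivAt (fun t => ((N.factorial : ℝ) / ∏ i, ((a i).factorial : ℝ)) *
          (∏ i, iteratedDeriv (a i) y t) / (y t) ^ m)
        (((N.factorial :ℝ)/∏ i, ((a i).factorial : ℝ)) *
            (∑ i, (∏ j ∈ univ.erase i, v (a j)) * v (a i + 1)) / u ^ m
          - (m:ℝ) * (((N.factorial :ℝ)/∏ i, ((a i).factorial : ℝ)) *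
            (v 1 * ∏ i, v (a i)) / u ^ (m+1))) x := by
    intro m hm a ha
    obtain ⟨hpos, hsum⟩ := mem_Sfin.mp ha
    have hale : ∀ i, a i ≤ N := fun i => by
      have : a i ≤ ∑ j, a j :=
        Finset.single_le_sum (fun j _ => Nat.zero_le _) (Finset.mem_univ i)
      omega
    set K : ℝ := (N.factorial : ℝ) / ∏ i, ((a i).factorial : ℝ) with hK
    have hP : HasDerivAt (fun t => ∏ i, iteratedDeriv (a i) y t)
        (∑ i, (∏ j ∈ univ.erase i, iteratedDeriv (a j) y x) • v (a i + 1)) x :=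
      HasDerivAt.fun_finsetProd (fun i _ => hderivs (a i) (hale i))
    have hQ : HasDerivAt (fun t => (y t) ^ m) ((m:ℝ) * u ^ (m-1) * v 1) x := hy'.pow m
    have hdiv := (hP.const_mul K).fun_div hQ (pow_ne_zero m hu)
    refine hdiv.congr_deriv ?_
    symm
    obtain ⟨k, rfl⟩ : ∃ k, m = k + 1 := ⟨m - 1, by have := (Finset.mem_Icc.mp hm).1; omega⟩
    simp only [Nat.add_sub_cancel, smul_eq_mul]
    simp only [show y x = u from rfl, show ∀ k, iteratedDeriv k y x = v k from fun _ => rfl]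
    have hupow : u ^ (k+1) ≠ 0 := pow_ne_zero _ hu
    push_cast
    field_simp
    ring
  -- sum it all up
  have hsum : HasDerivAt (fun t => ∑ m ∈ Icc 1 N, (-1:ℝ)^(m+1) * (1/m) *
        ∑ a ∈ Sfin N m, ((N.factorial : ℝ) / ∏ i, ((a i).factorial : ℝ)) *
          (∏ i, iteratedDeriv (a i) y t) / (y t) ^ m)
      (∑ m ∈ Icc 1 N, (-1:ℝ)^(m+1) * (1/m) *
        ∑ a ∈ Sfin N m,
          (((N.factorial :ℝ)/∏ i, ((a i).factorial : ℝ)) *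
            (∑ i, (∏ j ∈ univ.erase i, v (a j)) * v (a i + 1)) / u ^ m
          - (m:ℝ) * (((N.factorial :ℝ)/∏ i, ((a i).factorial : ℝ)) *
            (v 1 * ∏ i, v (a i)) / u ^ (m+1)))) x := by
    refine HasDerivAt.fun_sum fun m hm => ?_
    exact (HasDerivAt.fun_sum fun a ha => hterm m hm a ha).const_mul _
  convert hsum using 1
  rw [← key v u hu N hN]
  have : ∀ m ∈ Icc 1 N, (-1:ℝ)^(m+1) * (1/m) *
        ∑ a ∈ Sfin N m,
          (((N.factorial :ℝ)/∏ i, ((a i).factorial : ℝ)) *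
            (∑ i, (∏ j ∈ univ.erase i, v (a j)) * v (a i + 1)) / u ^ m
          - (m:ℝ) * (((N.factorial :ℝ)/∏ i, ((a i).factorial : ℝ)) *
            (v 1 * ∏ i, v (a i)) / u ^ (m+1)))
      = (-1:ℝ)^(m+1) * (1/m) *
          (∑ a ∈ Sfin N m, ((N.factorial :ℝ)/∏ i, ((a i).factorial : ℝ)) *
            (∑ i, (∏ j ∈ univ.erase i, v (a j)) * v (a i + 1)) / u ^ m)
        - (-1:ℝ)^(m+1) *
          ∑ a ∈ Sfin N m, ((N.factorial :ℝ)/∏ i, ((a i).factorial : ℝ)) *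
            (v 1 * ∏ i, v (a i)) / u ^ (m+1) := by
    intro m hm
    have hm1 : (1:ℕ) ≤ m := (Finset.mem_Icc.mp hm).1
    have hm0 : (m:ℝ) ≠ 0 := by positivity
    rw [Finset.sum_sub_distrib, ← Finset.mul_sum]
    set p := ∑ a ∈ Sfin N m, ((N.factorial :ℝ)/∏ i, ((a i).factorial : ℝ)) *
            (∑ i, (∏ j ∈ univ.erase i, v (a j)) * v (a i + 1)) / u ^ m
    set q := ∑ a ∈ Sfin N m, ((N.factorial :ℝ)/∏ i, ((a i).factorial : ℝ)) *
            (v 1 * ∏ i, v (a i)) / u ^ (m+1)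
    field_simp
  rw [Finset.sum_congr rfl this, Finset.sum_sub_distrib]

private lemma aux_formula {U : Set ℝ} (hU : IsOpen U) (y : ℝ → ℝ)
    (hy0 : ∀ x ∈ U, y x ≠ 0) : ∀ n : ℕ, ContDiffOn ℝ (n + 1) y U → ∀ x ∈ U,
    iteratedDeriv n (fun t => deriv y t / y t) x =
      ∑ m ∈ Icc 1 (n+1), (-1:ℝ)^(m+1) * (1/m) *
        ∑ a ∈ Sfin (n+1) m, (((n+1).factorial : ℝ) / ∏ i, ((a i).factorial : ℝ)) *
          (∏ i, iteratedDeriv (a i) y x) / (y x) ^ m := by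
  intro n
  induction n with
  | zero =>
    intro hy x hx
    rw [iteratedDeriv_zero]
    have hS : Sfin 1 1 = {(fun _ => 1 : Fin 1 → ℕ)} := by
      ext a
      rw [mem_Sfin, Finset.mem_singleton]
      constructor
      · rintro ⟨h1, h2⟩
        funext i
        have hi : i = 0 := Subsingleton.elim i 0
        rw [hi]
        rw [Fin.sum_univ_one] at h2
        exact h2
      · rintro rfl
        exact ⟨fun i => le_refl 1, by rw [Fin.sum_univ_one]⟩
    rw [show (0:ℕ)+1 = 1 from rfl, Finset.Icc_self, Finset.sum_singleton, hS,
      Finset.sum_singleton]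
    simp [iteratedDeriv_one, Nat.factorial]
  | succ n ih =>
    intro hy x hx
    have h1 : ContDiffOn ℝ (n + 1) y U := hy.of_le (by exact_mod_cast Nat.le_succ (n+1))
    have hEq : Set.EqOn (iteratedDeriv n (fun t => deriv y t / y t))
        (fun z => ∑ m ∈ Icc 1 (n+1), (-1:ℝ)^(m+1) * (1/m) *
          ∑ a ∈ Sfin (n+1) m, (((n+1).factorial : ℝ) / ∏ i, ((a i).factorial : ℝ)) *
            (∏ i, iteratedDeriv (a i) y z) / (y z) ^ m) U := fun z hz => ih h1 z hz
    rw [iteratedDeriv_succ]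
    have hev : iteratedDeriv n (fun t => deriv y t / y t) =ᶠ[nhds x]
        (fun z => ∑ m ∈ Icc 1 (n+1), (-1:ℝ)^(m+1) * (1/m) *
          ∑ a ∈ Sfin (n+1) m, (((n+1).factorial : ℝ) / ∏ i, ((a i).factorial : ℝ)) *
            (∏ i, iteratedDeriv (a i) y z) / (y z) ^ m) :=
      Filter.eventuallyEq_of_mem (hU.mem_nhds hx) hEq
    rw [hev.deriv_eq]
    have hder := hasDerivAt_rhs hU (N := n+1) (by omega)
      (by exact_mod_cast hy) hy0 hx
    exact hder.deriv

/-- Lemma 2.3: explicit formula for the higher derivatives of the logarithmic derivative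
`y′/y`:
`d^n/dx^n (y′/y) = ∑_{m=1}^{n+1} (−1)^{m+1} (1/m)
  ∑_{(a_1,…,a_m), a_i ≥ 1, ∑ a_i = n+1} ((n+1)!/(a_1!⋯a_m!)) y^{(a_1)}⋯y^{(a_m)}/y^m`,
where the inner sum runs over ordered `m`-tuples of positive integers summing to `n+1`. -/
theorem iteratedDeriv_logDeriv_formula (U : Set ℝ) (hU : IsOpen U) (y : ℝ → ℝ) (n : ℕ)
    (hy : ContDiffOn ℝ (n + 1) y U) (hy0 : ∀ x ∈ U, y x ≠ 0) :
    ∀ x ∈ U,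
      iteratedDeriv n (fun t => deriv y t / y t) x =
        ∑ m ∈ Finset.Icc 1 (n + 1), (-1 : ℝ) ^ (m + 1) * (1 / (m : ℝ)) *
          ∑ a ∈ (Fintype.piFinset fun _ : Fin m => Finset.range (n + 2)).filter
              (fun a => (∀ i, 1 ≤ a i) ∧ ∑ i, a i = n + 1),
            ((Nat.factorial (n + 1) : ℝ) / ∏ i, (Nat.factorial (a i) : ℝ)) *
              (∏ i, iteratedDeriv (a i) y x) / (y x) ^ m := by
  intro x hx
  exact aux_formula hU y hy0 n hy x hx
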